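/- For GD on F(x,y) = ‖μI - xyᵀ‖_F²/2 with x,y ∈ ℝⁿ, writing U_k = x_kᵀy_k, V_k = ‖x_k‖², W_k = ‖y_k‖², the iteration x_{k+1} = x_k + h(μI - x_ky_kᵀ)y_k, y_{k+1} = y_k + h(μI - y_kx_kᵀ)x_k satisfies V_{k+1}W_{k+1} - U_{k+1}² = (V_kW_k - U_k²)·(1 - h(V_k + W_k) + h²(V_kW_k - μ²))². -/

import Mathlib

open BigOperators

/-- For GD on `F(x,y) = ‖μI - xyᵀ‖_F²/2`, with `U = xᵀy`, `V = ‖x‖²`, `W = ‖y‖²`,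
the update `x₊ = x + h(μI - xyᵀ)y`, `y₊ = y + h(μI - yxᵀ)x` satisfies
`V₊W₊ - U₊² = (VW - U²)(1 - h(V + W) + h²(VW - μ²))²`. -/
theorem rank1_alignment_identity {n : ℕ} (μ h : ℝ) (hμ : 0 < μ) (hh : 0 < h)
    (x y : Fin n → ℝ) :
    (∑ i, (x i + h * (μ * y i - (∑ j, y j ^ 2) * x i)) ^ 2) *
        (∑ i, (y i + h * (μ * x i - (∑ j, x j ^ 2) * y i)) ^ 2) -
      (∑ i, (x i + h * (μ * y i - (∑ j, y j ^ 2) * x i)) *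
          (y i + h * (μ * x i - (∑ j, x j ^ 2) * y i))) ^ 2
    = ((∑ i, x i ^ 2) * (∑ i, y i ^ 2) - (∑ i, x i * y i) ^ 2) *
        (1 - h * ((∑ i, x i ^ 2) + ∑ i, y i ^ 2)
          + h ^ 2 * ((∑ i, x i ^ 2) * (∑ i, y i ^ 2) - μ ^ 2)) ^ 2 := by
  set U := ∑ i, x i * y i with hU
  set V := ∑ i, x i ^ 2 with hV
  set W := ∑ i, y i ^ 2 with hW
  have h1 : (∑ i, (x i + h * (μ * y i - W * x i)) ^ 2)
      = (1 - h*W)^2 * V + 2*(1-h*W)*(h*μ) * U + (h*μ)^2 * W := by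
    have e : ∀ i, (x i + h * (μ * y i - W * x i)) ^ 2
        = (1-h*W)^2 * x i ^ 2 + 2*(1-h*W)*(h*μ) * (x i * y i) + (h*μ)^2 * y i ^ 2 :=
      fun i => by ring
    simp_rw [e, Finset.sum_add_distrib, ← Finset.mul_sum]; rfl
  have h2 : (∑ i, (y i + h * (μ * x i - V * y i)) ^ 2)
      = (1 - h*V)^2 * W + 2*(1-h*V)*(h*μ) * U + (h*μ)^2 * V := by
    have e : ∀ i, (y i + h * (μ * x i - V * y i)) ^ 2
        = (1-h*V)^2 * y i ^ 2 + 2*(1-h*V)*(h*μ) * (x i * y i) + (h*μ)^2 * x i ^ 2 :=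
      fun i => by ring
    simp_rw [e, Finset.sum_add_distrib, ← Finset.mul_sum]; rfl
  have h3 : (∑ i, (x i + h * (μ * y i - W * x i)) * (y i + h * (μ * x i - V * y i)))
      = ((1-h*W)*(1-h*V) + (h*μ)^2) * U + (1-h*W)*(h*μ) * V + (1-h*V)*(h*μ) * W := by
    have e : ∀ i, (x i + h * (μ * y i - W * x i)) * (y i + h * (μ * x i - V * y i))
        = ((1-h*W)*(1-h*V) + (h*μ)^2) * (x i * y i)
          + (1-h*W)*(h*μ) * x i ^ 2 + (1-h*V)*(h*μ) * y i ^ 2 :=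
      fun i => by ring
    simp_rw [e, Finset.sum_add_distrib, ← Finset.mul_sum]; rfl
  rw [h1, h2, h3]; ring
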